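/- arXiv:2305.13294 — 4 statements merged into one kernel-verified Lean document; each statement's English description precedes it below -/
import Mathlib

section
/- For every η > 0, the convex cone K of functions W ∈ L²(ℝ) that are even, nonnegative, and unimodal (monotonically increasing on x < 0 and decreasing on x > 0) is invariant under A_η: if W ∈ K then A_η W ∈ K. -/
open MeasureTheory intervalIntegral
open scoped ENNReal

/-- The averaging operator `(A_η W)(x) = (1/η) ∫_{x-η/2}^{x+η/2} W(y) dy`. -/
noncomputable def Aop (η : ℝ) (W : ℝ → ℝ) : ℝ → ℝ :=
  fun x => (1 / η) * ∫ y in (x - η / 2)..(x + η / 2), W y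

/-!
Averaging over a window is linear and positive, and it commutes with the reflection `x ↦ -x`,
so evenness and nonnegativity are inherited. For `x ≤ x' ≤ 0`, sliding the window from `x` to
`x'` replaces `[x - η/2, x' - η/2]` by its translate by `η`, whose points are no farther from the
origin; unimodality makes this increase the integral, and evenness transfers monotonicity to
`[0, ∞)`. Square integrability follows from domination: the window average is at most the value
of `W` at the window's point closest to the origin, giving the bound
`W (x - η/2) + W (x + η/2) + W 0 · 𝟙[-η/2, η/2]`, a sum of functions in `L²`.
-/

open Set

theorem MeasureTheory.MemLp.intervalIntegrable {E : Type*} [NormedAddCommGroup E] {f : ℝ → E}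
    {p : ℝ≥0∞} (hf : MemLp f p volume) (hp : 1 ≤ p) (a b : ℝ) :
    IntervalIntegrable f volume a b :=
  ((hf.locallyIntegrable hp).integrableOn_isCompact isCompact_uIcc).intervalIntegrable

theorem MonotoneOn.apply_le_apply_of_abs_le {W : ℝ → ℝ} (hmono : MonotoneOn W (Iic 0))
    (heven : ∀ x, W (-x) = W x) {a b : ℝ} (hab : |a| ≤ |b|) : W b ≤ W a := by
  have h_neg_abs : ∀ x, W x = W (-|x|) := fun x => by
    rcases abs_choice x with h | h <;> rw [h] <;> simp [heven]
  rw [h_neg_abs a, h_neg_abs b]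
  exact hmono (by simp) (by simp) (neg_le_neg hab)

section Aop

variable {η : ℝ} {W : ℝ → ℝ}

theorem Aop_nonneg (hη : 0 < η) (hpos : ∀ x, 0 ≤ W x) (x : ℝ) : 0 ≤ Aop η W x :=
  mul_nonneg (by positivity) (integral_nonneg (by linarith) fun y _ => hpos y)

theorem Aop_neg (heven : ∀ x, W (-x) = W x) (x : ℝ) : Aop η W (-x) = Aop η W x := by
  unfold Aop
  congr 1
  have hreflect := integral_comp_neg (a := x - η / 2) (b := x + η / 2) W
  simp only [heven] at hreflect
  rw [hreflect]
  congr 1 <;> ring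

theorem Aop_le_of_forall_le (hη : 0 < η) (hW : ∀ a b, IntervalIntegrable W volume a b)
    {x M : ℝ} (hM : ∀ y ∈ Icc (x - η / 2) (x + η / 2), W y ≤ M) : Aop η W x ≤ M := by
  have hint : ∫ y in (x - η / 2)..(x + η / 2), W y ≤ η * M := by
    calc ∫ y in (x - η / 2)..(x + η / 2), W y
        ≤ ∫ _ in (x - η / 2)..(x + η / 2), M :=
          integral_mono_on (by linarith) (hW _ _) intervalIntegrable_const hM
      _ = η * M := by simp only [intervalIntegral.integral_const, smul_eq_mul]; ring
  calc Aop η W x ≤ 1 / η * (η * M) := mul_le_mul_of_nonneg_left hint (by positivity)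
    _ = M := by field_simp

theorem continuous_Aop (hW : ∀ a b, IntervalIntegrable W volume a b) :
    Continuous (Aop η W) := by
  have hF := continuous_primitive hW 0
  have hA : Aop η W = fun x => 1 / η *
      ((∫ y in (0 : ℝ)..(x + η / 2), W y) - ∫ y in (0 : ℝ)..(x - η / 2), W y) := by
    ext x
    rw [Aop, integral_interval_sub_left (hW _ _) (hW _ _)]
  rw [hA]
  fun_prop

theorem monotoneOn_Aop (hη : 0 < η) (hW : ∀ a b, IntervalIntegrable W volume a b)
    (heven : ∀ x, W (-x) = W x) (hmono : MonotoneOn W (Iic 0)) :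
    MonotoneOn (Aop η W) (Iic 0) := by
  intro x _ x' hx' hxx'
  rw [mem_Iic] at hx'
  set h := η / 2 with hh
  have hshift : ∫ y in (x - h)..(x' - h), W y ≤ ∫ y in (x + h)..(x' + h), W y :=
    calc ∫ y in (x - h)..(x' - h), W y
        ≤ ∫ y in (x - h)..(x' - h), W (y + η) := by
          refine integral_mono_on (by linarith) (hW _ _) ?_ fun y hy => ?_
          · convert (hW (x + h) (x' + h)).comp_add_right η using 1 <;> ring
          · refine hmono.apply_le_apply_of_abs_le heven ?_
            rw [abs_of_nonpos (by linarith [hy.2] : y ≤ 0), abs_le]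
            constructor <;> linarith [hy.2, hh]
      _ = ∫ y in (x + h)..(x' + h), W y := by
          rw [integral_comp_add_right]
          congr 1 <;> ring
  have hwindow : ∫ y in (x - h)..(x + h), W y ≤ ∫ y in (x' - h)..(x' + h), W y := by
    have := integral_interval_sub_interval_comm' (hW (x' - h) (x' + h)) (hW (x - h) (x + h))
      (hW (x' - h) (x - h))
    linarith [hshift, integral_symm (μ := volume) (f := W) (x' - h) (x - h)]
  exact mul_le_mul_of_nonneg_left hwindow (by positivity)

theorem antitoneOn_Aop (hη : 0 < η) (hW : ∀ a b, IntervalIntegrable W volume a b)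
    (heven : ∀ x, W (-x) = W x) (hmono : MonotoneOn W (Iic 0)) :
    AntitoneOn (Aop η W) (Ici 0) := by
  intro x hx x' hx' hxx'
  rw [← Aop_neg heven x, ← Aop_neg heven x']
  exact monotoneOn_Aop hη hW heven hmono (by simpa using hx') (by simpa using hx)
    (neg_le_neg hxx')

theorem Aop_le_translates_add_indicator (hη : 0 < η)
    (hW : ∀ a b, IntervalIntegrable W volume a b) (heven : ∀ x, W (-x) = W x)
    (hpos : ∀ x, 0 ≤ W x) (hmono : MonotoneOn W (Iic 0)) (x : ℝ) :
    Aop η W x ≤ W (x - η / 2) + W (x + η / 2) +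
      (Icc (-(η / 2)) (η / 2)).indicator (fun _ => W 0) x := by
  have h₁ := hpos (x - η / 2)
  have h₂ := hpos (x + η / 2)
  have h₃ : 0 ≤ (Icc (-(η / 2)) (η / 2)).indicator (fun _ => W 0) x :=
    indicator_nonneg (fun _ _ => hpos 0) x
  refine Aop_le_of_forall_le hη hW fun y ⟨hy₁, hy₂⟩ => ?_
  have hle : ∀ a, |a| ≤ |y| → W y ≤ W a := fun _ => hmono.apply_le_apply_of_abs_le heven
  rcases le_or_gt (η / 2) x with hx | hx
  · have := hle (x - η / 2) <| by
      rw [abs_of_nonneg (by linarith), abs_of_nonneg (by linarith)]; linarith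
    linarith
  rcases le_or_gt x (-(η / 2)) with hx' | hx'
  · have := hle (x + η / 2) <| by
      rw [abs_of_nonpos (by linarith), abs_of_nonpos (by linarith)]; linarith
    linarith
  rw [indicator_of_mem (mem_Icc.mpr ⟨hx'.le, hx.le⟩)]
  linarith [hle 0 (by simp)]

theorem memLp_Aop (hη : 0 < η) (hL2 : MemLp W 2 volume) (heven : ∀ x, W (-x) = W x)
    (hpos : ∀ x, 0 ≤ W x) (hmono : MonotoneOn W (Iic 0)) : MemLp (Aop η W) 2 volume := by
  have hW := hL2.intervalIntegrable one_le_two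
  have hdom : MemLp (fun x => W (x - η / 2) + W (x + η / 2) +
      (Icc (-(η / 2)) (η / 2)).indicator (fun _ => W 0) x) 2 volume :=
    ((hL2.comp_measurePreserving (measurePreserving_sub_right volume _)).add
      (hL2.comp_measurePreserving (measurePreserving_add_right volume _))).add
      (memLp_indicator_const 2 measurableSet_Icc _ (Or.inr measure_Icc_lt_top.ne))
  refine hdom.of_le (continuous_Aop hW).aestronglyMeasurable (ae_of_all _ fun x => ?_)
  have hle := Aop_le_translates_add_indicator hη hW heven hpos hmono x
  have hnonneg := Aop_nonneg hη hpos x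
  rwa [Real.norm_of_nonneg hnonneg, Real.norm_of_nonneg (hnonneg.trans hle)]

end Aop

theorem stmt5_general (η : ℝ) (hη : 0 < η) (W : ℝ → ℝ)
    (hL2 : MemLp W 2 (volume : Measure ℝ))
    (heven : ∀ x, W (-x) = W x)
    (hpos : ∀ x, 0 ≤ W x)
    (hmono : MonotoneOn W (Set.Iic 0)) :
    MemLp (Aop η W) 2 (volume : Measure ℝ) ∧
    (∀ x, Aop η W (-x) = Aop η W x) ∧
    (∀ x, 0 ≤ Aop η W x) ∧
    MonotoneOn (Aop η W) (Set.Iic 0) ∧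
    AntitoneOn (Aop η W) (Set.Ici 0) := by
  have hW := hL2.intervalIntegrable one_le_two
  exact ⟨memLp_Aop hη hL2 heven hpos hmono, Aop_neg heven, Aop_nonneg hη hpos,
    monotoneOn_Aop hη hW heven hmono, antitoneOn_Aop hη hW heven hmono⟩

theorem stmt5 (η : ℝ) (hη : 0 < η) (W : ℝ → ℝ)
    (hL2 : MemLp W 2 (volume : Measure ℝ))
    (heven : ∀ x, W (-x) = W x)
    (hpos : ∀ x, 0 ≤ W x)
    (hmono : MonotoneOn W (Set.Iic 0))
    (hanti : AntitoneOn W (Set.Ici 0)) :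
    MemLp (Aop η W) 2 (volume : Measure ℝ) ∧
    (∀ x, Aop η W (-x) = Aop η W x) ∧
    (∀ x, 0 ≤ Aop η W x) ∧
    MonotoneOn (Aop η W) (Set.Iic 0) ∧
    AntitoneOn (Aop η W) (Set.Ici 0) :=
  stmt5_general η hη W hL2 heven hpos hmono
end

section
/- For all y ∈ ℝ one has 0 ≤ 1 − sinc²(y) ≤ y²/3, where sinc(y) = sin(y)/y for y ≠ 0 and sinc(0) = 1; equivalently, 0 ≤ (y²/3) − (1 − sinc²(y)) ≤ y²/3. -/
open MeasureTheory intervalIntegral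
open scoped ENNReal

/-- The unnormalized sinus cardinalis. -/
noncomputable def sinc (z : ℝ) : ℝ := if z = 0 then 1 else Real.sin z / z

lemma sin_ge_aux (y : ℝ) (hy : 0 ≤ y) : y - y ^ 3 / 6 ≤ Real.sin y := by
  have hmono : MonotoneOn (fun x : ℝ => Real.sin x - (x - x ^ 3 / 6)) (Set.Ici 0) := by
    apply monotoneOn_of_deriv_nonneg (convex_Ici 0)
    · fun_prop
    · intro x hx
      apply DifferentiableAt.differentiableWithinAt
      fun_prop
    · intro x hx
      have hd : HasDerivAt (fun x : ℝ => Real.sin x - (x - x ^ 3 / 6))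
          (Real.cos x - (1 - x ^ 2 / 2)) x := by
        have h2 : HasDerivAt (fun x : ℝ => x - x ^ 3 / 6)
            (1 - 3 * x ^ 2 / 6) x := (hasDerivAt_id x).sub
          (((hasDerivAt_pow 3 x).div_const 6))
        have := (Real.hasDerivAt_sin x).sub h2
        exact this.congr_deriv (by ring)
      rw [hd.deriv]
      have := Real.one_sub_sq_div_two_le_cos (x := x)
      linarith
  have h0 := hmono (Set.self_mem_Ici) (Set.mem_Ici.2 hy) hy
  simp at h0
  linarith

theorem stmt12 (y : ℝ) :
    0 ≤ 1 - sinc y ^ 2 ∧ 1 - sinc y ^ 2 ≤ y ^ 2 / 3 := by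
  have heven : sinc (-y) = sinc y := by
    unfold sinc
    rcases eq_or_ne y 0 with h | h
    · simp [h]
    · simp [h, neg_ne_zero.2 h, neg_div_neg_eq]
  -- reduce to y ≥ 0
  wlog hy : 0 ≤ y generalizing y
  · have := this (-y) (by simpa [heven]) (by linarith)
    simpa [heven] using this
  rcases eq_or_lt_of_le hy with h0 | hpos
  · simp [sinc, ← h0]
  have hne : y ≠ 0 := ne_of_gt hpos
  have hs : sinc y = Real.sin y / y := by simp [sinc, hne]
  have h1 : Real.sin y ≤ y := (Real.sin_lt hpos).le
  have h2 : y - y ^ 3 / 6 ≤ Real.sin y := sin_ge_aux y hy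
  have h3 : |Real.sin y| ≤ |y| := Real.abs_sin_le_abs -- may not exist
  constructor
  · have : sinc y ^ 2 ≤ 1 := by
      rw [hs, div_pow, div_le_one (by positivity)]
      calc Real.sin y ^ 2 = |Real.sin y| ^ 2 := (sq_abs _).symm
        _ ≤ |y| ^ 2 := by gcongr
        _ = y ^ 2 := sq_abs y
    linarith
  · have hlo : 1 - y ^ 2 / 6 ≤ sinc y := by
      rw [hs, le_div_iff₀ hpos]
      nlinarith
    have hhi : sinc y ≤ 1 := by
      rw [hs, div_le_one hpos]; exact h1
    nlinarith [sq_nonneg (sinc y), sq_nonneg y]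
end

section
/- For all y ∈ ℝ, 1 − sinc²(y) ≥ min(y²/6, 2/3), where sinc(y) = sin(y)/y for y ≠ 0 and sinc(0) = 1. -/
open MeasureTheory intervalIntegral
open scoped ENNReal

lemma key_half (s : ℝ) (hs : 0 < s) (hs1 : s ≤ 3/5) :
    (2 * Real.sin s * Real.cos s) ^ 2 ≤ (2*s)^2 - (2*s)^4/6 := by
  have h1 := Real.sin_lt hs
  have h2 : s - s^3/4 < Real.sin s := by have := Real.sin_gt_sub_cube hs; nlinarith [pow_pos hs 3]
  have h3 := Real.sin_sq_add_cos_sq s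
  have h3s : s^3 ≤ (9/25) * s := by nlinarith [mul_pos hs hs]
  have hlb : 0 < s - s^3/4 := by nlinarith
  have hsinpos : 0 < Real.sin s := by linarith
  have ht : Real.sin s ^ 2 ≤ s ^ 2 := by nlinarith
  have ht2 : (s - s^3/4)^2 ≤ Real.sin s ^ 2 := by nlinarith
  have ht4 : (s - s^3/4)^4 ≤ Real.sin s ^ 4 := by nlinarith [sq_nonneg (Real.sin s ^2 + (s - s^3/4)^2), sq_nonneg (s - s^3/4)]
  have ha : (91/100 : ℝ) ≤ 1 - s^2/4 := by nlinarith
  have hb : (91/100 : ℝ)^4 ≤ (1 - s^2/4)^4 := pow_le_pow_left₀ (by norm_num) ha 4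
  have hq : (2/3) * s^4 ≤ (s - s^3/4)^4 := by
    have he : (s - s^3/4)^4 = s^4 * (1 - s^2/4)^4 := by ring
    rw [he]
    nlinarith [pow_pos hs 4, hb]
  nlinarith [ht, ht4, hq]

theorem stmt13 (y : ℝ) :
    min (y ^ 2 / 6) (2 / 3) ≤ 1 - sinc y ^ 2 := by
  rcases eq_or_ne y 0 with h | h
  · simp [sinc, h]
  have hx : sinc y = Real.sin y / y := if_neg h
  have hy2 : 0 < y ^ 2 := by positivity
  have hsq : sinc y ^ 2 = Real.sin y ^ 2 / y ^ 2 := by rw [hx, div_pow]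
  have hsin1 : Real.sin y ^ 2 ≤ 1 := by
    nlinarith [Real.sin_sq_add_cos_sq y, sq_nonneg (Real.cos y)]
  rcases le_or_gt (y ^ 2) (36/25) with hcase | hcase
  · -- small y : use key_half with s = |y|/2
    set x := |y| with hxdef
    have hx0 : 0 < x := abs_pos.mpr h
    have hxx : x ^ 2 = y ^ 2 := sq_abs y
    have hxle : x ≤ 6/5 := by nlinarith
    have hk := key_half (x/2) (by positivity) (by linarith)
    have h2x : 2 * (x/2) = x := by ring
    rw [← Real.sin_two_mul, h2x] at hk
    have hsy : Real.sin y ^ 2 = Real.sin x ^ 2 := by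
      rcases abs_cases y with ⟨h1, _⟩ | ⟨h1, _⟩
      · rw [hxdef, h1]
      · rw [hxdef, h1, Real.sin_neg]; ring
    have hmin : min (y ^ 2 / 6) (2/3) ≤ y ^ 2 / 6 := min_le_left _ _
    have hdiv : Real.sin y ^ 2 / y ^ 2 ≤ 1 - y ^ 2 / 6 := by
      rw [div_le_iff₀ hy2]
      nlinarith [hk]
    rw [hsq]; linarith
  rcases le_or_gt (y ^ 2) 4 with hc2 | hc2
  · have hmin : min (y ^ 2 / 6) (2/3) ≤ y ^ 2 / 6 := min_le_left _ _
    have hdiv : Real.sin y ^ 2 / y ^ 2 ≤ 1 - y ^ 2 / 6 := by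
      rw [div_le_iff₀ hy2]
      nlinarith [mul_pos hy2 hy2]
    rw [hsq]; linarith
  · have hmin : min (y ^ 2 / 6) (2/3) ≤ 2/3 := min_le_right _ _
    have hdiv : Real.sin y ^ 2 / y ^ 2 ≤ 1/3 := by
      rw [div_le_iff₀ hy2]
      nlinarith
    rw [hsq]; linarith
end

section
/- Let α : (0,∞) → ℝ be nonnegative and integrable with weight ξ⁴, with ∫₀^∞ α(ξ) ξ⁴ dξ < ∞, and define b_ε(k) = 1 + ∫₀^∞ α(ξ) ξ² (1 − sinc²(εξk/2))/ε² dξ and b_0(k) = 1 + (1/12)(∫₀^∞ α(ξ) ξ⁴ dξ) k². Then for every fixed k ∈ ℝ, b_ε(k) → b_0(k) as ε → 0, and moreover 0 ≤ b_0(k) − b_ε(k) for all k and ε > 0. -/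
open MeasureTheory intervalIntegral
open scoped ENNReal

lemma nonneg_of_hasDerivAt (f f' : ℝ → ℝ) (hf : ∀ x, HasDerivAt f (f' x) x) (h0 : f 0 = 0)
    (h' : ∀ x, 0 ≤ x → 0 ≤ f' x) : ∀ x, 0 ≤ x → 0 ≤ f x := by
  intro x hx
  have hm : MonotoneOn f (Set.Ici 0) :=
    monotoneOn_of_deriv_nonneg (convex_Ici 0)
      (fun y _ => (hf y).continuousAt.continuousWithinAt)
      (fun y _ => (hf y).differentiableAt.differentiableWithinAt)
      (fun y hy => by
        rw [(hf y).deriv]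
        exact h' y (le_of_lt (by simpa [interior_Ici] using hy)))
  calc (0:ℝ) = f 0 := h0.symm
  _ ≤ f x := hm Set.self_mem_Ici hx hx

lemma sin_ge_cubic : ∀ x : ℝ, 0 ≤ x → x - x^3/6 ≤ Real.sin x := by
  have := nonneg_of_hasDerivAt (fun x => Real.sin x - (x - x^3/6))
    (fun x => Real.cos x - (1 - x^2/2)) ?_ (by simp) ?_
  · intro x hx; have := this x hx; linarith
  · intro x
    have h1 : HasDerivAt (fun x : ℝ => x - x^3/6) (1 - 3*x^2/6) x := by
      have := ((hasDerivAt_pow 3 x).div_const 6)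
      simpa using (hasDerivAt_id x).fun_sub this
    have := (Real.hasDerivAt_sin x).fun_sub h1
    exact this.congr_deriv (by ring)
  · intro x _; have := Real.one_sub_sq_div_two_le_cos (x := x); linarith

lemma cos_le_quartic : ∀ x : ℝ, Real.cos x ≤ 1 - x^2/2 + x^4/24 := by
  have key : ∀ x : ℝ, 0 ≤ x → Real.cos x ≤ 1 - x^2/2 + x^4/24 := by
    have := nonneg_of_hasDerivAt (fun x => 1 - x^2/2 + x^4/24 - Real.cos x)
      (fun x => -(x) + 4*x^3/24 + Real.sin x) ?_ (by simp) ?_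
    · intro x hx; have := this x hx; linarith
    · intro x
      have h1 : HasDerivAt (fun x : ℝ => 1 - x^2/2 + x^4/24) (-x + 4*x^3/24) x := by
        have h2 := ((hasDerivAt_pow 2 x).div_const 2)
        have h4 := ((hasDerivAt_pow 4 x).div_const 24)
        simpa using ((hasDerivAt_const x (1:ℝ)).fun_sub h2).fun_add h4
      have := h1.fun_sub (Real.hasDerivAt_cos x)
      exact this.congr_deriv (by ring)
    · intro x hx; have := sin_ge_cubic x hx; linarith
  intro x
  rcases le_total 0 x with hx | hx
  · exact key x hx
  · have h := key (-x) (by linarith)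
    rw [Real.cos_neg, show ((-x)^2 : ℝ) = x^2 by ring, show ((-x)^4 : ℝ) = x^4 by ring] at h
    exact h

lemma sin_le_quintic : ∀ x : ℝ, 0 ≤ x → Real.sin x ≤ x - x^3/6 + x^5/120 := by
  have := nonneg_of_hasDerivAt (fun x => x - x^3/6 + x^5/120 - Real.sin x)
    (fun x => 1 - 3*x^2/6 + 5*x^4/120 - Real.cos x) ?_ (by simp) ?_
  · intro x hx; have := this x hx; linarith
  · intro x
    have h3 := ((hasDerivAt_pow 3 x).div_const 6)
    have h5 := ((hasDerivAt_pow 5 x).div_const 120)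
    have h1 : HasDerivAt (fun x : ℝ => x - x^3/6 + x^5/120) (1 - 3*x^2/6 + 5*x^4/120) x := by
      simpa using ((hasDerivAt_id x).fun_sub h3).fun_add h5
    exact h1.sub (Real.hasDerivAt_sin x)
  · intro x _; have := cos_le_quartic x; nlinarith

lemma cos_ge_sextic : ∀ x : ℝ, 1 - x^2/2 + x^4/24 - x^6/720 ≤ Real.cos x := by
  have key : ∀ x : ℝ, 0 ≤ x → 1 - x^2/2 + x^4/24 - x^6/720 ≤ Real.cos x := by
    have := nonneg_of_hasDerivAt (fun x => Real.cos x - (1 - x^2/2 + x^4/24 - x^6/720))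
      (fun x => -Real.sin x - (-x + 4*x^3/24 - 6*x^5/720)) ?_ (by simp) ?_
    · intro x hx; have := this x hx; linarith
    · intro x
      have h2 := ((hasDerivAt_pow 2 x).div_const 2)
      have h4 := ((hasDerivAt_pow 4 x).div_const 24)
      have h6 := ((hasDerivAt_pow 6 x).div_const 720)
      have h1 : HasDerivAt (fun x : ℝ => 1 - x^2/2 + x^4/24 - x^6/720)
          (-x + 4*x^3/24 - 6*x^5/720) x := by
        simpa using (((hasDerivAt_const x (1:ℝ)).fun_sub h2).fun_add h4).fun_sub h6
      exact (Real.hasDerivAt_cos x).sub h1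
    · intro x hx; have := sin_le_quintic x hx; nlinarith
  intro x
  rcases le_total 0 x with hx | hx
  · exact key x hx
  · have h := key (-x) (by linarith)
    rw [Real.cos_neg, show ((-x)^2 : ℝ) = x^2 by ring, show ((-x)^4 : ℝ) = x^4 by ring,
      show ((-x)^6 : ℝ) = x^6 by ring] at h
    exact h

lemma sinc_sq_le_one (x : ℝ) : sinc x ^ 2 ≤ 1 := by
  unfold sinc
  split
  · norm_num
  · rename_i hx
    rw [div_pow, div_le_one (by positivity)]
    exact Real.sin_sq_le_sq

lemma key_bounds (x : ℝ) :
    x^2/3 - 2*x^4/45 ≤ 1 - sinc x ^ 2 ∧ 1 - sinc x ^ 2 ≤ x^2/3 := by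
  rcases eq_or_ne x 0 with rfl | hx
  · norm_num [sinc]
  · have hx2 : (0:ℝ) < x^2 := by positivity
    have hsq : Real.sin x ^ 2 = (1 - Real.cos (2*x)) / 2 := by
      rw [Real.sin_sq_eq_half_sub]; ring
    have hval : 1 - sinc x ^ 2 = (x^2 - Real.sin x ^2) / x^2 := by
      unfold sinc
      rw [if_neg hx, div_pow]
      field_simp
    have hub := cos_le_quartic (2*x)
    have hlb := cos_ge_sextic (2*x)
    constructor
    · rw [hval, hsq, le_div_iff₀ hx2]; nlinarith
    · rw [hval, hsq, div_le_iff₀ hx2]; nlinarith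

set_option maxHeartbeats 1000000 in
theorem stmt15 (α : ℝ → ℝ)
    (hα : ∀ ξ ∈ Set.Ioi (0:ℝ), 0 ≤ α ξ)
    (hint2 : MeasureTheory.IntegrableOn (fun ξ => α ξ * ξ ^ 2) (Set.Ioi 0) volume)
    (hint4 : MeasureTheory.IntegrableOn (fun ξ => α ξ * ξ ^ 4) (Set.Ioi 0) volume)
    (k : ℝ) :
    Filter.Tendsto
      (fun ε => 1 + ∫ ξ in Set.Ioi (0:ℝ),
        α ξ * ξ ^ 2 * (1 - sinc (ε * ξ * k / 2) ^ 2) / ε ^ 2)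
      (nhdsWithin 0 (Set.Ioi 0))
      (nhds (1 + 1 / 12 * (∫ ξ in Set.Ioi (0:ℝ), α ξ * ξ ^ 4) * k ^ 2)) ∧
    ∀ ε : ℝ, 0 < ε →
      1 + (∫ ξ in Set.Ioi (0:ℝ), α ξ * ξ ^ 2 * (1 - sinc (ε * ξ * k / 2) ^ 2) / ε ^ 2) ≤
        1 + 1 / 12 * (∫ ξ in Set.Ioi (0:ℝ), α ξ * ξ ^ 4) * k ^ 2 := by
  have hsinc_m : Measurable sinc := by
    unfold sinc
    exact Measurable.ite (measurableSet_eq) measurable_const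
      (Real.measurable_sin.div measurable_id)
  -- measurability of the integrand
  have hmeas : ∀ ε : ℝ, AEStronglyMeasurable
      (fun ξ => α ξ * ξ ^ 2 * (1 - sinc (ε * ξ * k / 2) ^ 2) / ε ^ 2)
      (volume.restrict (Set.Ioi 0)) := by
    intro ε
    have hm1 : Measurable (fun ξ : ℝ => ε * ξ * k / 2) :=
      ((measurable_const.mul measurable_id).mul_const k).div_const 2
    have hm2 : Measurable (fun ξ : ℝ => 1 - sinc (ε * ξ * k / 2) ^ 2) :=
      measurable_const.sub ((hsinc_m.comp hm1).pow_const 2)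
    have h3 : AEStronglyMeasurable (fun ξ => α ξ * ξ ^ 2 * (1 - sinc (ε * ξ * k / 2) ^ 2))
        (volume.restrict (Set.Ioi 0)) :=
      hint2.aestronglyMeasurable.mul hm2.aestronglyMeasurable
    simp only [div_eq_mul_inv]
    exact h3.mul_const _
  -- pointwise nonnegativity and upper bound
  have hnn : ∀ ε : ℝ, 0 < ε → ∀ ξ ∈ Set.Ioi (0:ℝ),
      0 ≤ α ξ * ξ ^ 2 * (1 - sinc (ε * ξ * k / 2) ^ 2) / ε ^ 2 := by
    intro ε hε ξ hξ
    have h1 := sinc_sq_le_one (ε * ξ * k / 2)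
    have h2 := hα ξ hξ
    apply div_nonneg _ (by positivity)
    apply mul_nonneg (mul_nonneg h2 (sq_nonneg _)) (by linarith)
  have hub : ∀ ε : ℝ, 0 < ε → ∀ ξ ∈ Set.Ioi (0:ℝ),
      α ξ * ξ ^ 2 * (1 - sinc (ε * ξ * k / 2) ^ 2) / ε ^ 2 ≤ 1/12 * (α ξ * ξ^4) * k^2 := by
    intro ε hε ξ hξ
    have hb := (key_bounds (ε * ξ * k / 2)).2
    have hA : 0 ≤ α ξ * ξ ^ 2 := mul_nonneg (hα ξ hξ) (sq_nonneg _)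
    rw [div_le_iff₀ (by positivity : (0:ℝ) < ε ^ 2)]
    nlinarith [mul_le_mul_of_nonneg_left hb hA]
  -- integrability of the dominating function
  have hbi : Integrable (fun ξ => 1/12 * (α ξ * ξ^4) * k^2) (volume.restrict (Set.Ioi 0)) :=
    (hint4.const_mul (1/12)).mul_const (k^2)
  have hbeq : (∫ ξ in Set.Ioi (0:ℝ), 1/12 * (α ξ * ξ^4) * k^2)
      = 1 / 12 * (∫ ξ in Set.Ioi (0:ℝ), α ξ * ξ ^ 4) * k ^ 2 := by
    rw [MeasureTheory.integral_mul_const, MeasureTheory.integral_const_mul]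
  constructor
  · apply Filter.Tendsto.const_add
    have key := MeasureTheory.tendsto_integral_filter_of_dominated_convergence
      (μ := volume.restrict (Set.Ioi 0)) (l := nhdsWithin (0:ℝ) (Set.Ioi 0))
      (F := fun ε ξ => α ξ * ξ ^ 2 * (1 - sinc (ε * ξ * k / 2) ^ 2) / ε ^ 2)
      (f := fun ξ => 1/12 * (α ξ * ξ^4) * k^2)
      (fun ξ => 1/12 * (α ξ * ξ^4) * k^2)
      (Filter.Eventually.of_forall hmeas)
      ?_ hbi ?_
    · rwa [hbeq] at key
    · filter_upwards [self_mem_nhdsWithin] with ε hε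
      rw [ae_restrict_iff' measurableSet_Ioi]
      filter_upwards with ξ hξ
      rw [Real.norm_eq_abs, abs_of_nonneg (hnn ε hε ξ hξ)]
      exact hub ε hε ξ hξ
    · rw [ae_restrict_iff' measurableSet_Ioi]
      filter_upwards with ξ hξ
      have hA : 0 ≤ α ξ * ξ ^ 2 := mul_nonneg (hα ξ hξ) (sq_nonneg _)
      set c := ξ * k / 2 with hc
      have hlo : Filter.Tendsto
          (fun ε : ℝ => α ξ * ξ ^ 2 * (c^2/3 - 2*c^4*ε^2/45)) (nhdsWithin 0 (Set.Ioi 0))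
          (nhds (1/12 * (α ξ * ξ^4) * k^2)) := by
        have : Filter.Tendsto (fun ε : ℝ => α ξ * ξ ^ 2 * (c^2/3 - 2*c^4*ε^2/45)) (nhds 0)
            (nhds (α ξ * ξ ^ 2 * (c^2/3 - 2*c^4*(0:ℝ)^2/45))) := by
          apply Filter.Tendsto.const_mul
          apply Filter.Tendsto.const_sub
          exact ((continuous_pow 2).tendsto 0).const_mul _ |>.div_const _
        have heq : α ξ * ξ ^ 2 * (c^2/3 - 2*c^4*(0:ℝ)^2/45) = 1/12 * (α ξ * ξ^4) * k^2 := by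
          rw [hc]; ring
        rw [heq] at this
        exact this.mono_left nhdsWithin_le_nhds
      apply tendsto_of_tendsto_of_tendsto_of_le_of_le' hlo tendsto_const_nhds
      · filter_upwards [self_mem_nhdsWithin] with ε hε
        have hε' : (0:ℝ) < ε := hε
        have hb := (key_bounds (ε * c)).1
        have harg : ε * ξ * k / 2 = ε * c := by rw [hc]; ring
        rw [harg, le_div_iff₀ (by positivity : (0:ℝ) < ε ^ 2)]
        nlinarith [mul_le_mul_of_nonneg_left hb hA]
      · filter_upwards [self_mem_nhdsWithin] with ε hε
        exact hub ε hε ξ hξ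
  · intro ε hε
    apply add_le_add_right
    rw [← hbeq]
    apply integral_mono_of_nonneg
    · filter_upwards [ae_restrict_mem measurableSet_Ioi] with ξ hξ
      exact hnn ε hε ξ hξ
    · exact hbi
    · filter_upwards [ae_restrict_mem measurableSet_Ioi] with ξ hξ
      exact hub ε hε ξ hξ
end
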